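/- arXiv:2106.04254 — 2 statements merged into one kernel-verified Lean document; each statement's English description precedes it below -/
import Mathlib

section
/- Let f : ℝ → ℝ≥0 be an (L, a₁, a₂)-nice hinge function with a₂ > 0, and let v ∈ ℝⁿ. Then ∑ᵢ f(vᵢ) ≥ min(a₂/(2a₁), 1/2) · ‖v⁺‖₁, where v⁺ is the positive part of v. -/
theorem nice_hinge_sum_lower_bound (n : ℕ) (f : ℝ → ℝ) (L a₁ a₂ : ℝ)
    (ha₁ : 0 < a₁) (ha₂ : 0 < a₂)
    (hf0 : ∀ z, 0 ≤ f z)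
    (hLip : ∀ x y : ℝ, |f x - f y| ≤ L * |x - y|)
    (hrelu : ∀ z : ℝ, |f z - max 0 z| ≤ a₁)
    (hpos : ∀ z : ℝ, 0 ≤ z → a₂ ≤ f z)
    (v : Fin n → ℝ) :
    min (a₂ / (2 * a₁)) (1 / 2) * ∑ i ∈ Finset.univ.filter (fun i => 0 ≤ v i), v i
      ≤ ∑ i, f (v i) := by
  set c := min (a₂ / (2 * a₁)) (1 / 2) with hc
  have hkey : ∀ z : ℝ, 0 ≤ z → c * z ≤ f z := by
    intro z hz
    rcases le_or_gt z (2 * a₁) with h | h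
    · calc c * z ≤ (a₂ / (2 * a₁)) * z := by
            exact mul_le_mul_of_nonneg_right (min_le_left _ _) hz
        _ ≤ (a₂ / (2 * a₁)) * (2 * a₁) := by
            exact mul_le_mul_of_nonneg_left h (by positivity)
        _ = a₂ := by field_simp
        _ ≤ f z := hpos z hz
    · have h1 := (abs_le.mp (hrelu z)).2
      have hmax : max 0 z = z := max_eq_right hz
      rw [hmax] at h1
      have : z - a₁ ≤ f z := by linarith [abs_le.mp (hrelu z)]
      calc c * z ≤ (1 / 2) * z := mul_le_mul_of_nonneg_right (min_le_right _ _) hz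
        _ ≤ z - a₁ := by linarith
        _ ≤ f z := this
  calc c * ∑ i ∈ Finset.univ.filter (fun i => 0 ≤ v i), v i
      = ∑ i ∈ Finset.univ.filter (fun i => 0 ≤ v i), c * v i := Finset.mul_sum _ _ _
    _ ≤ ∑ i ∈ Finset.univ.filter (fun i => 0 ≤ v i), f (v i) := by
        apply Finset.sum_le_sum
        intro i hi
        exact hkey _ (Finset.mem_filter.mp hi).2
    _ ≤ ∑ i, f (v i) := Finset.sum_le_sum_of_subset_of_nonneg (Finset.filter_subset _ _)
        (fun i _ _ => hf0 _)
end

section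
/- Let f : ℝ → ℝ≥0 satisfy f(z) ≥ a₂ for z ≥ 0 and f(z) ≥ max(0,z) − a₁ for all z, with 0 < a₂ and 0 < a₁. Then for any v ∈ ℝⁿ, ∑_{i: 0 ≤ vᵢ ≤ 2a₁} f(vᵢ) + ∑_{i: vᵢ > 2a₁} f(vᵢ) ≥ min(a₂/(2a₁), 1/2) · ∑_{i: vᵢ ≥ 0} vᵢ. -/
theorem hinge_split_lower_bound (n : ℕ) (f : ℝ → ℝ) (a₁ a₂ : ℝ)
    (ha₁ : 0 < a₁) (ha₂ : 0 < a₂)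
    (hf0 : ∀ z, 0 ≤ f z)
    (hpos : ∀ z : ℝ, 0 ≤ z → a₂ ≤ f z)
    (hrelu : ∀ z : ℝ, max 0 z - a₁ ≤ f z)
    (v : Fin n → ℝ) :
    min (a₂ / (2 * a₁)) (1 / 2) * ∑ i ∈ Finset.univ.filter (fun i => 0 ≤ v i), v i
      ≤ (∑ i ∈ Finset.univ.filter (fun i => 0 ≤ v i ∧ v i ≤ 2 * a₁), f (v i)) +
        ∑ i ∈ Finset.univ.filter (fun i => 2 * a₁ < v i), f (v i) := by
  classical
  set c := min (a₂ / (2 * a₁)) (1 / 2) with hc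
  have hc1 : c ≤ a₂ / (2 * a₁) := min_le_left _ _
  have hc2 : c ≤ 1 / 2 := min_le_right _ _
  have hc0 : 0 ≤ c := le_min (by positivity) (by norm_num)
  have hsplit : (Finset.univ.filter (fun i => 0 ≤ v i)) =
      (Finset.univ.filter (fun i => 0 ≤ v i ∧ v i ≤ 2 * a₁)) ∪
      (Finset.univ.filter (fun i : Fin n => 2 * a₁ < v i)) := by
    ext i
    simp only [Finset.mem_filter, Finset.mem_union, Finset.mem_univ, true_and]
    constructor
    · intro h
      rcases le_or_gt (v i) (2 * a₁) with h2 | h2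
      · exact Or.inl ⟨h, h2⟩
      · exact Or.inr h2
    · rintro (⟨h, _⟩ | h)
      · exact h
      · nlinarith
  have hdisj : Disjoint (Finset.univ.filter (fun i => 0 ≤ v i ∧ v i ≤ 2 * a₁))
      (Finset.univ.filter (fun i : Fin n => 2 * a₁ < v i)) := by
    rw [Finset.disjoint_filter]
    rintro i _ ⟨_, h⟩ h'
    exact absurd h (not_le.mpr h')
  rw [hsplit, Finset.mul_sum, Finset.sum_union hdisj]
  refine add_le_add (Finset.sum_le_sum ?_) (Finset.sum_le_sum ?_)
  · rintro i hi
    rw [Finset.mem_filter] at hi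
    obtain ⟨_, h0, h2⟩ := hi
    have : c * v i ≤ a₂ / (2 * a₁) * v i := mul_le_mul_of_nonneg_right hc1 h0
    have h3 : a₂ / (2 * a₁) * v i ≤ a₂ := by
      rw [div_mul_eq_mul_div, div_le_iff₀ (by positivity)]
      nlinarith
    exact this.trans (h3.trans (hpos _ h0))
  · rintro i hi
    rw [Finset.mem_filter] at hi
    obtain ⟨_, h2⟩ := hi
    have h0 : 0 ≤ v i := by nlinarith
    have : c * v i ≤ 1 / 2 * v i := mul_le_mul_of_nonneg_right hc2 h0
    have h3 : 1 / 2 * v i ≤ v i - a₁ := by nlinarith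
    have h4 : max 0 (v i) = v i := max_eq_right h0
    have := hrelu (v i)
    rw [h4] at this
    linarith [mul_le_mul_of_nonneg_right hc2 h0]
end
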